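/- Let G be a finite bipartite graph. Then the set 𝔐(G) of vertices that are covered by every maximum matching of G is a vertex cover of G, i.e., every edge of G has at least one endpoint that is covered by every maximum matching of G. -/

import Mathlib

/-- A digraph (given by its arc relation) is semi-complete if it is simple (no loops;
multiple arcs are impossible in this encoding) and any two distinct vertices are
joined by an arc in at least one direction. -/
def SemiComplete {V : Type*} (E : V → V → Prop) : Prop :=
  (∀ v, ¬ E v v) ∧ ∀ v w : V, v ≠ w → E v w ∨ E w v

/-- The outdegree of a vertex: the number of its outneighbours. -/
noncomputable def outdeg {V : Type*} (E : V → V → Prop) (v : V) : ℕ :=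
  {w | E v w}.ncard

/-- A directed path, encoded as a nonempty list of pairwise distinct vertices in which
consecutive vertices are joined by arcs. -/
def IsDipath {V : Type*} (E : V → V → Prop) (p : List V) : Prop :=
  p ≠ [] ∧ p.Nodup ∧ p.Chain' E

/-- A directed path from `v` to `w`. -/
def PathFrom {V : Type*} (E : V → V → Prop) (v w : V) (p : List V) : Prop :=
  IsDipath E p ∧ p.head? = some v ∧ p.getLast? = some w

/-- The length of a path (its number of arcs). -/
def pathLen {V : Type*} (p : List V) : ℕ := p.length - 1

/-- The internal vertices of a path: all vertices except the first and the last one. -/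
def internals {V : Type*} (p : List V) : List V := (p.drop 1).dropLast

/-- The arcs of a path. -/
def arcsOf {V : Type*} (p : List V) : List (V × V) := p.zip (p.drop 1)

/-- A `(k,d)`-short jungle: a set `X` of at least `k` vertices such that for every ordered
pair of distinct vertices `v, w ∈ X` there are `k` pairwise distinct paths from `v` to `w`,
each of length at most `d`, that are pairwise internally vertex-disjoint. -/
def ShortJungle {V : Type*} (E : V → V → Prop) (k d : ℕ) (X : Set V) : Prop :=
  k ≤ X.ncard ∧ ∀ v ∈ X, ∀ w ∈ X, v ≠ w →
    ∃ P : Fin k → List V, Function.Injective P ∧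
      (∀ i, PathFrom E v w (P i) ∧ pathLen (P i) ≤ d) ∧
      (∀ i j, i ≠ j → ∀ z ∈ internals (P i), z ∉ internals (P j))

/-- A `(k,d)`-short immersion jungle: as a short jungle, but with the `k` paths required
to be pairwise arc-disjoint instead of internally vertex-disjoint. -/
def ShortImmersionJungle {V : Type*} (E : V → V → Prop) (k d : ℕ) (X : Set V) : Prop :=
  k ≤ X.ncard ∧ ∀ v ∈ X, ∀ w ∈ X, v ≠ w →
    ∃ P : Fin k → List V, Function.Injective P ∧
      (∀ i, PathFrom E v w (P i) ∧ pathLen (P i) ≤ d) ∧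
      (∀ i j, i ≠ j → ∀ a ∈ arcsOf (P i), a ∉ arcsOf (P j))

/-- `H` (arc relation `Eh`) is topologically contained in `G` (arc relation `Eg`):
there is an injective map `η` on vertices and, for every arc `(u,v)` of `H`, a directed
path in `G` from `η u` to `η v`, these paths being pairwise internally vertex-disjoint
with no internal vertex in the image of `η`. -/
def TopContain {W V : Type*} (Eh : W → W → Prop) (Eg : V → V → Prop) : Prop :=
  ∃ (η : W → V) (P : W → W → List V), Function.Injective η ∧
    (∀ u v : W, Eh u v → PathFrom Eg (η u) (η v) (P u v)) ∧
    (∀ u v : W, Eh u v → ∀ z ∈ internals (P u v), z ∉ Set.range η) ∧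
    (∀ u v u' v' : W, Eh u v → Eh u' v' → (u, v) ≠ (u', v') →
      ∀ z ∈ internals (P u v), z ∉ internals (P u' v'))

/-- `H` (arc relation `Eh`) is immersed in `G` (arc relation `Eg`): there is an injective
map `η` on vertices and, for every arc `(u,v)` of `H`, a directed path in `G` from `η u`
to `η v`, these paths being pairwise arc-disjoint. -/
def Immerses {W V : Type*} (Eh : W → W → Prop) (Eg : V → V → Prop) : Prop :=
  ∃ (η : W → V) (P : W → W → List V), Function.Injective η ∧
    (∀ u v : W, Eh u v → PathFrom Eg (η u) (η v) (P u v)) ∧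
    (∀ u v u' v' : W, Eh u v → Eh u' v' → (u, v) ≠ (u', v') →
      ∀ a ∈ arcsOf (P u v), a ∉ arcsOf (P u' v'))

/-- A path decomposition of the digraph with arc relation `E`, with bags `Bs 0, …, Bs (r-1)`. -/
def IsPathDecomp {V : Type*} {r : ℕ} (E : V → V → Prop) (Bs : Fin r → Set V) : Prop :=
  (⋃ i, Bs i) = Set.univ ∧
  (∀ i j l : Fin r, i < j → j < l → Bs i ∩ Bs l ⊆ Bs j) ∧
  (∀ u v : V, E u v →
    (∃ i, u ∈ Bs i ∧ v ∈ Bs i) ∨ ∃ i j : Fin r, j < i ∧ u ∈ Bs i ∧ v ∈ Bs j)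

/-- The pathwidth of a digraph: the least `p` admitting a path decomposition all of whose
bags have size at most `p + 1`. -/
noncomputable def pathwidth {V : Type*} (E : V → V → Prop) : ℕ :=
  sInf {p | ∃ (r : ℕ) (Bs : Fin r → Set V), IsPathDecomp E Bs ∧ ∀ i, (Bs i).ncard - 1 ≤ p}

/-- A separation of a digraph: a pair `(A,B)` covering all vertices with no arc from
`A \ B` to `B \ A`. -/
def IsSeparation {V : Type*} (E : V → V → Prop) (A B : Set V) : Prop :=
  A ∪ B = Set.univ ∧ ∀ v ∈ A \ B, ∀ w ∈ B \ A, ¬ E v w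

/-- A separation chain `((A 0, B 0), …, (A r, B r))`. -/
def IsSepChain {V : Type*} {r : ℕ} (E : V → V → Prop) (A B : Fin (r + 1) → Set V) : Prop :=
  A 0 = ∅ ∧ B 0 = Set.univ ∧ A (Fin.last r) = Set.univ ∧ B (Fin.last r) = ∅ ∧
  (∀ i, IsSeparation E (A i) (B i)) ∧
  (∀ i j : Fin (r + 1), i ≤ j → A i ⊆ A j ∧ B j ⊆ B i)

/-- A `(k,ℓ)`-degree tangle: at least `k` vertices whose outdegrees pairwise differ
by at most `ℓ`. -/
def DegreeTangle {V : Type*} (E : V → V → Prop) (k ℓ : ℕ) (X : Set V) : Prop :=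
  k ≤ X.ncard ∧ ∀ v ∈ X, ∀ w ∈ X, outdeg E v ≤ outdeg E w + ℓ

/-- A `(k,ℓ)`-matching tangle: disjoint sets `X`, `Y` of size `k` with a matching from `X`
to `Y`, where every vertex of `Y` has outdegree more than `ℓ` larger than every vertex
of `X`. -/
def MatchingTangle {V : Type*} (E : V → V → Prop) (k ℓ : ℕ) (X Y : Set V) : Prop :=
  Disjoint X Y ∧ X.ncard = k ∧ Y.ncard = k ∧
  (∃ f : V → V, Set.BijOn f X Y ∧ ∀ v ∈ X, E v (f v)) ∧
  (∀ v ∈ X, ∀ w ∈ Y, outdeg E v + ℓ < outdeg E w)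

/-- A `k`-backward tangle: a partition `(X,Y)` of the vertex set with at least `k` arcs
from `X` to `Y`, and every outdegree in `Y` at least every outdegree in `X`. -/
def BackwardTangle {V : Type*} (E : V → V → Prop) (k : ℕ) (X Y : Set V) : Prop :=
  X ∪ Y = Set.univ ∧ Disjoint X Y ∧
  k ≤ {p : V × V | p.1 ∈ X ∧ p.2 ∈ Y ∧ E p.1 p.2}.ncard ∧
  (∀ v ∈ X, ∀ w ∈ Y, outdeg E v ≤ outdeg E w)

/-- The width of an ordering of the vertices (given as a bijection from `Fin n`):
the maximum, over prefixes, of the number of arcs leaving the prefix forward. -/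
noncomputable def orderWidth {V : Type*} [Fintype V] (E : V → V → Prop)
    (e : Fin (Fintype.card V) ≃ V) : ℕ :=
  ⨆ α : Fin (Fintype.card V + 1),
    {p : V × V | ((e.symm p.1 : ℕ) < (α : ℕ)) ∧ ¬ ((e.symm p.2 : ℕ) < (α : ℕ)) ∧
      E p.1 p.2}.ncard

/-- The cutwidth of a digraph: the minimum width over all orderings of the vertices. -/
noncomputable def cutwidth {V : Type*} [Fintype V] (E : V → V → Prop) : ℕ :=
  ⨅ e : Fin (Fintype.card V) ≃ V, orderWidth E e

/-- `(X,Y)` is a bipartition of the simple graph `G`. -/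
def IsBipartition {V : Type*} (G : SimpleGraph V) (X Y : Set V) : Prop :=
  X ∪ Y = Set.univ ∧ Disjoint X Y ∧
  ∀ u v : V, G.Adj u v → (u ∈ X ∧ v ∈ Y) ∨ (u ∈ Y ∧ v ∈ X)

/-- A matching of `G`: a set of edges of `G` that are pairwise vertex-disjoint. -/
def IsMatching {V : Type*} (G : SimpleGraph V) (M : Set (Sym2 V)) : Prop :=
  M ⊆ G.edgeSet ∧ ∀ e ∈ M, ∀ f ∈ M, e ≠ f → ∀ v : V, v ∈ e → v ∉ f

/-- A maximum matching of `G`. -/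
def IsMaxMatching {V : Type*} [Fintype V] (G : SimpleGraph V) (M : Set (Sym2 V)) : Prop :=
  IsMatching G M ∧ ∀ N : Set (Sym2 V), IsMatching G N → N.ncard ≤ M.ncard

/-- A vertex is covered by a matching if it is an endpoint of one of its edges. -/
def CoveredBy {V : Type*} (M : Set (Sym2 V)) (v : V) : Prop := ∃ e ∈ M, v ∈ e

/-- A vertex is covered by every maximum matching of `G`. -/
def CoveredByAllMax {V : Type*} [Fintype V] (G : SimpleGraph V) (v : V) : Prop :=
  ∀ M : Set (Sym2 V), IsMaxMatching G M → CoveredBy M v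

/-- Deletion of the vertex `w` from a simple graph (keeping the vertex type). -/
def deleteVert {V : Type*} (G : SimpleGraph V) (w : V) : SimpleGraph V where
  Adj x y := G.Adj x y ∧ x ≠ w ∧ y ≠ w
  symm := ⟨fun _ _ h => ⟨h.1.symm, h.2.2, h.2.1⟩⟩
  loopless := ⟨fun _ h => G.irrefl h.1⟩

/-- An `M`-alternating path from `u` to `v`: a (possibly trivial) path starting at `u` and
ending at `v` whose edges alternate between non-matching and matching edges, beginning
with a non-matching edge. -/
def AltPathFrom {V : Type*} (G : SimpleGraph V) (M : Set (Sym2 V)) (u v : V) : Prop :=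
  ∃ p : List V, p ≠ [] ∧ p.Nodup ∧ p.Chain' G.Adj ∧
    p.head? = some u ∧ p.getLast? = some v ∧
    ∀ i : ℕ, (h : i + 1 < p.length) →
      (s(p.get ⟨i, Nat.lt_of_succ_lt h⟩, p.get ⟨i + 1, h⟩) ∈ M ↔ i % 2 = 1)
lemma match_unique {V : Type*} {G : SimpleGraph V} {M : Set (Sym2 V)} (h : IsMatching G M)
    {e f : Sym2 V} (he : e ∈ M) (hf : f ∈ M) {w : V} (hwe : w ∈ e) (hwf : w ∈ f) : e = f := by
  by_contra hne
  exact h.2 e he f hf hne w hwe hwf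

lemma flip_matching {V : Type*} {G : SimpleGraph V} {Q A B : Set (Sym2 V)}
    (hQ : IsMatching G Q) (hBsub : B ⊆ G.edgeSet)
    (hBpair : ∀ e ∈ B, ∀ f ∈ B, e ≠ f → ∀ w : V, w ∈ e → w ∉ f)
    (hmeet : ∀ e ∈ B, ∀ f ∈ Q, (∃ w : V, w ∈ e ∧ w ∈ f) → f ∈ A) :
    IsMatching G ((Q \ A) ∪ B) := by
  constructor
  · rintro e (he | he)
    · exact hQ.1 he.1
    · exact hBsub he
  · rintro e (he | he) f (hf | hf) hne w hwe hwf
    · exact hQ.2 e he.1 f hf.1 hne w hwe hwf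
    · exact he.2 (hmeet f hf e he.1 ⟨w, hwf, hwe⟩)
    · exact hf.2 (hmeet e he f hf.1 ⟨w, hwe, hwf⟩)
    · exact hBpair e he f hf hne w hwe hwf

lemma insert_matching {V : Type*} {G : SimpleGraph V} {Q : Set (Sym2 V)} {a b : V}
    (hQ : IsMatching G Q) (hab : G.Adj a b) (ha : ∀ e ∈ Q, a ∉ e) (hb : ∀ e ∈ Q, b ∉ e) :
    IsMatching G (insert s(a, b) Q) := by
  constructor
  · rintro e (rfl | he)
    · exact hab
    · exact hQ.1 he
  · rintro e (rfl | he) f (rfl | hf) hne w hwe hwf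
    · exact hne rfl
    · rcases Sym2.mem_iff.mp hwe with rfl | rfl
      · exact ha f hf hwf
      · exact hb f hf hwf
    · rcases Sym2.mem_iff.mp hwf with rfl | rfl
      · exact ha e he hwe
      · exact hb e he hwe
    · exact hQ.2 e he f hf hne w hwe hwf

lemma max_contra {V : Type*} [Fintype V] {G : SimpleGraph V} {Q : Set (Sym2 V)} {a b : V}
    (hQ : IsMaxMatching G Q) (hab : G.Adj a b) (ha : ∀ e ∈ Q, a ∉ e) (hb : ∀ e ∈ Q, b ∉ e) :
    False := by
  have hm := insert_matching hQ.1 hab ha hb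
  have hnm : s(a, b) ∉ Q := fun h => ha _ h (by simp)
  have hc := Set.ncard_insert_of_notMem hnm (Set.toFinite Q)
  have := hQ.2 _ hm
  omega

lemma iio_ncard (k : ℕ) : (Set.Iio k).ncard = k := by
  rw [← Finset.coe_range, Set.ncard_coe_finset, Finset.card_range]

lemma key {V : Type*} [Fintype V] (G : SimpleGraph V) (X Y : Set V)
    (hB : IsBipartition G X Y) (u v : V) (huv : G.Adj u v)
    (M N : Set (Sym2 V)) (hM : IsMaxMatching G M) (hN : IsMaxMatching G N)
    (hMu : ∀ e ∈ M, u ∉ e) (hNv : ∀ e ∈ N, v ∉ e) : False := by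
  classical
  have hMv : ∃ e ∈ M, v ∈ e := by
    by_contra h
    push_neg at h
    exact max_contra hM huv hMu h
  have hNu : ∃ e ∈ N, u ∈ e := by
    by_contra h
    push_neg at h
    exact max_contra hN huv h hNv
  obtain ⟨e0, he0, hue0⟩ := hNu
  obtain ⟨x1, rfl⟩ : ∃ w, e0 = s(u, w) := ⟨Sym2.Mem.other hue0, (Sym2.other_spec hue0).symm⟩
  have he0NM : s(u, x1) ∈ N \ M := ⟨he0, fun h => hMu _ h hue0⟩
  have hux1 : G.Adj u x1 := hN.1.1 he0
  have hone : ∃ x : ℕ → V, x 0 = u ∧ (∀ i ≤ 1, ∀ j ≤ 1, x i = x j → i = j) ∧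
      ∀ i < 1, (Even i → s(x i, x (i+1)) ∈ N \ M) ∧ (¬ Even i → s(x i, x (i+1)) ∈ M \ N) := by
    refine ⟨fun i => if i = 0 then u else x1, if_pos rfl, ?_, ?_⟩
    · intro i hi j hj hij
      simp only at hij
      by_cases h1 : i = 0 <;> by_cases h2 : j = 0
      · omega
      · rw [if_pos h1, if_neg h2] at hij
        exact absurd hij hux1.ne
      · rw [if_neg h1, if_pos h2] at hij
        exact absurd hij.symm hux1.ne
      · omega
    · intro i hi
      have h0 : i = 0 := by omega
      subst h0
      norm_num
      exact he0NM
  -- maximal alternating path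
  obtain ⟨n, ⟨x, hx0, hinj, hedge⟩, hnmax⟩ :
      ∃ n : ℕ, (∃ x : ℕ → V, x 0 = u ∧ (∀ i ≤ n, ∀ j ≤ n, x i = x j → i = j) ∧
        ∀ i < n, (Even i → s(x i, x (i+1)) ∈ N \ M) ∧ (¬ Even i → s(x i, x (i+1)) ∈ M \ N)) ∧
      ∀ m : ℕ, (∃ x : ℕ → V, x 0 = u ∧ (∀ i ≤ m, ∀ j ≤ m, x i = x j → i = j) ∧
        ∀ i < m, (Even i → s(x i, x (i+1)) ∈ N \ M) ∧ (¬ Even i → s(x i, x (i+1)) ∈ M \ N)) →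
        m ≤ n := by
    set S : Set ℕ := {n | ∃ x : ℕ → V, x 0 = u ∧ (∀ i ≤ n, ∀ j ≤ n, x i = x j → i = j) ∧
      ∀ i < n, (Even i → s(x i, x (i+1)) ∈ N \ M) ∧ (¬ Even i → s(x i, x (i+1)) ∈ M \ N)}
      with hS
    have h1S : 1 ∈ S := hone
    have hbdd : BddAbove S := by
      refine ⟨Fintype.card V, ?_⟩
      rintro m ⟨x, _, hinj, _⟩
      have hinj' : Function.Injective (fun i : Fin (m+1) => x i) := by
        intro i j hij
        exact Fin.ext (hinj i (Nat.lt_succ_iff.mp i.isLt) j (Nat.lt_succ_iff.mp j.isLt) hij)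
      have := Fintype.card_le_of_injective _ hinj'
      simp at this
      omega
    exact ⟨sSup S, Nat.sSup_mem ⟨1, h1S⟩ hbdd, fun m hm => le_csSup hbdd hm⟩
  have hn1 : 1 ≤ n := hnmax 1 hone
  have hedgeG : ∀ i, i < n → G.Adj (x i) (x (i+1)) := by
    intro i hi
    by_cases h : Even i
    · exact hN.1.1 ((hedge i hi).1 h).1
    · exact hM.1.1 ((hedge i hi).2 h).1
  have hnoext : ∀ y : V, (∀ i, i ≤ n → y ≠ x i) →
      ((Even n → s(x n, y) ∈ N \ M) ∧ (¬ Even n → s(x n, y) ∈ M \ N)) → False := by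
    intro y hy hcon
    have hmem : n + 1 ≤ n := by
      refine hnmax (n+1) ⟨fun i => if i = n + 1 then y else x i, ?_, ?_, ?_⟩
      · simp only [if_neg (show (0:ℕ) ≠ n + 1 by omega)]
        exact hx0
      · intro i hi j hj hij
        simp only at hij
        by_cases h1 : i = n+1 <;> by_cases h2 : j = n+1
        · omega
        · rw [if_pos h1, if_neg h2] at hij
          exact absurd hij (hy j (by omega))
        · rw [if_neg h1, if_pos h2] at hij
          exact absurd hij.symm (hy i (by omega))
        · rw [if_neg h1, if_neg h2] at hij
          exact hinj i (by omega) j (by omega) hij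
      · intro i hi
        simp only
        by_cases h : i < n
        · rw [if_neg (show i ≠ n+1 by omega), if_neg (show i+1 ≠ n+1 by omega)]
          exact hedge i h
        · have hin : i = n := by omega
          rw [if_neg (show i ≠ n+1 by omega), if_pos (show i+1 = n+1 by omega), hin]
          exact hcon
    omega
  rcases Nat.even_or_odd n with hev | hod
  · -- n even: x n is unmatched in N
    have hnmod : n % 2 = 0 := Nat.even_iff.mp hev
    have hn2 : 2 ≤ n := by omega
    have hNend : ∀ f ∈ N, x n ∉ f := by
      intro f hf hxnf
      obtain ⟨y, rfl⟩ : ∃ w, f = s(x n, w) :=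
        ⟨Sym2.Mem.other hxnf, (Sym2.other_spec hxnf).symm⟩
      have hadjny : G.Adj (x n) y := hN.1.1 hf
      obtain ⟨m, hm⟩ : ∃ m, n = m + 1 := ⟨n - 1, by omega⟩
      have harr : s(x m, x (m+1)) ∈ M \ N :=
        (hedge m (by omega)).2 (by simp only [Nat.even_iff]; omega)
      have hfNM : s(x n, y) ∈ N \ M := by
        refine ⟨hf, fun hfM => ?_⟩
        have heq := match_unique hM.1 hfM harr.1 (Sym2.mem_mk_left _ _)
          (show x n ∈ s(x m, x (m+1)) by rw [hm]; exact Sym2.mem_mk_right _ _)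
        rw [heq] at hf
        exact harr.2 hf
      have hyfresh : ∀ i, i ≤ n → y ≠ x i := by
        intro i hi hyi
        rcases Nat.even_or_odd i with hie | hio
        · by_cases hin : i = n
          · rw [hin] at hyi
            exact hadjny.ne' hyi
          · have hg : s(x i, x (i+1)) ∈ N \ M := (hedge i (by omega)).1 hie
            have heq := match_unique hN.1 hf hg.1
              (show x i ∈ s(x n, y) by rw [← hyi]; exact Sym2.mem_mk_right _ _)
              (Sym2.mem_mk_left _ _)
            have hie' : i % 2 = 0 := Nat.even_iff.mp hie
            rcases Sym2.eq_iff.mp heq with ⟨h1, _⟩ | ⟨h1, _⟩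
            · have := hinj n le_rfl i hi h1
              omega
            · have := hinj n le_rfl (i+1) (by omega) h1
              omega
        · have hi1 : i % 2 = 1 := Nat.odd_iff.mp hio
          obtain ⟨m', rfl⟩ : ∃ m', i = m' + 1 := ⟨i - 1, by omega⟩
          have hg : s(x m', x (m'+1)) ∈ N \ M :=
            (hedge m' (by omega)).1 (by simp only [Nat.even_iff]; omega)
          have heq := match_unique hN.1 hf hg.1
            (show x (m'+1) ∈ s(x n, y) by rw [← hyi]; exact Sym2.mem_mk_right _ _)
            (Sym2.mem_mk_right _ _)
          rcases Sym2.eq_iff.mp heq with ⟨h1, _⟩ | ⟨h1, _⟩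
          · have := hinj n le_rfl m' (by omega) h1
            omega
          · have := hinj n le_rfl (m'+1) (by omega) h1
            omega
      exact hnoext y hyfresh ⟨fun _ => hfNM, fun h => absurd hev h⟩
    by_cases hxnv : x n = v
    · -- bipartite parity contradiction
      have hd : ∀ {a : V}, a ∈ X → a ∉ Y := fun ha => Set.disjoint_left.mp hB.2.1 ha
      have hflip : ∀ a b, G.Adj a b → (a ∈ X ↔ b ∉ X) := by
        intro a b hab
        rcases hB.2.2 a b hab with ⟨ha, hb⟩ | ⟨ha, hb⟩
        · exact ⟨fun _ h2 => hd h2 hb, fun _ => ha⟩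
        · exact ⟨fun hX => (hd hX ha).elim, fun hnb => (hnb hb).elim⟩
      have hpar : ∀ i, i ≤ n → (x i ∈ X ↔ (i % 2 = 0 ↔ u ∈ X)) := by
        intro i
        induction i with
        | zero => intro _; rw [hx0]; simp
        | succ k ih =>
          intro hk
          have h1 := hflip _ _ (hedgeG k (by omega))
          have h2 := ih (by omega)
          have h3 : ((k+1) % 2 = 0) ↔ ¬(k % 2 = 0) := by omega
          tauto
      have h4 := hpar n le_rfl
      rw [hxnv] at h4
      have h5 := hflip u v huv
      tauto
    · -- flip N along the path and add the edge uv
      have hkk2 : n = 2 * (n / 2) := by omega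
      set kk := n / 2 with hkkdef
      set Ase : Set (Sym2 V) := (fun j => s(x (2*j), x (2*j+1))) '' (Set.Iio kk) with hAse
      set Bse : Set (Sym2 V) := (fun j => s(x (2*j+1), x (2*j+2))) '' (Set.Iio kk) with hBse
      have hAsub : Ase ⊆ N \ M := by
        rintro e ⟨j, hj, rfl⟩
        have hj' : j < kk := hj
        exact (hedge (2*j) (by omega)).1 (even_two_mul j)
      have hBsub : Bse ⊆ M \ N := by
        rintro e ⟨j, hj, rfl⟩
        have hj' : j < kk := hj
        have h := (hedge (2*j+1) (by omega)).2 (by simp only [Nat.even_iff]; omega)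
        rw [show 2*j+1+1 = 2*j+2 from by omega] at h
        exact h
      have claimN : ∀ i, i ≤ n → ∀ f ∈ N, x i ∈ f → f ∈ Ase := by
        intro i hi f hf hxif
        rcases Nat.even_or_odd i with hie | hio
        · by_cases hin : i = n
          · exact absurd hxif (by rw [hin]; exact hNend f hf)
          · have hg : s(x i, x (i+1)) ∈ N \ M := (hedge i (by omega)).1 hie
            have heq := match_unique hN.1 hf hg.1 hxif (Sym2.mem_mk_left _ _)
            have hie' : i % 2 = 0 := Nat.even_iff.mp hie
            refine ⟨i/2, show i/2 < kk by omega, ?_⟩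
            simp only
            rw [show 2*(i/2) = i from by omega]
            exact heq.symm
        · have hi1 : i % 2 = 1 := Nat.odd_iff.mp hio
          obtain ⟨m', rfl⟩ : ∃ m', i = m' + 1 := ⟨i - 1, by omega⟩
          have hg : s(x m', x (m'+1)) ∈ N \ M :=
            (hedge m' (by omega)).1 (by simp only [Nat.even_iff]; omega)
          have heq := match_unique hN.1 hf hg.1 hxif (Sym2.mem_mk_right _ _)
          refine ⟨m'/2, show m'/2 < kk by omega, ?_⟩
          simp only
          rw [show 2*(m'/2) = m' from by omega]
          exact heq.symm
      have hBpair : ∀ e ∈ Bse, ∀ f ∈ Bse, e ≠ f → ∀ w : V, w ∈ e → w ∉ f :=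
        fun e he f hf => hM.1.2 e (hBsub he).1 f (hBsub hf).1
      have hmeet : ∀ e ∈ Bse, ∀ f ∈ N, (∃ w : V, w ∈ e ∧ w ∈ f) → f ∈ Ase := by
        rintro e ⟨j, hj, rfl⟩ f hf ⟨w, hwe, hwf⟩
        have hj' : j < kk := hj
        rcases Sym2.mem_iff.mp hwe with rfl | rfl
        · exact claimN (2*j+1) (by omega) f hf hwf
        · exact claimN (2*j+2) (by omega) f hf hwf
      have hflipm := flip_matching hN.1 (fun e he => hM.1.1 (hBsub he).1) hBpair hmeet
      have hu' : ∀ e ∈ (N \ Ase) ∪ Bse, u ∉ e := by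
        rintro e (⟨heN, heA⟩ | heB) hue
        · exact heA (claimN 0 (by omega) e heN (hx0 ▸ hue))
        · obtain ⟨j, hj, rfl⟩ := heB
          have hj' : j < kk := hj
          rcases Sym2.mem_iff.mp hue with h | h
          · have := hinj 0 (by omega) (2*j+1) (by omega) (hx0.trans h)
            omega
          · have := hinj 0 (by omega) (2*j+2) (by omega) (hx0.trans h)
            omega
      have hv' : ∀ e ∈ (N \ Ase) ∪ Bse, v ∉ e := by
        rintro e (⟨heN, _⟩ | heB) hve
        · exact hNv e heN hve
        · obtain ⟨j, hj, rfl⟩ := heB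
          have hj' : j < kk := hj
          rcases Sym2.mem_iff.mp hve with h | h
          · have hg : s(x (2*j), x (2*j+1)) ∈ N \ M :=
              (hedge (2*j) (by omega)).1 (even_two_mul j)
            exact hNv _ hg.1 (by rw [h]; exact Sym2.mem_mk_right _ _)
          · by_cases h2 : 2*j+2 = n
            · exact hxnv (by rw [← h2, ← h])
            · have hg : s(x (2*j+2), x (2*j+2+1)) ∈ N \ M :=
                (hedge (2*j+2) (by omega)).1 (by simp only [Nat.even_iff]; omega)
              exact hNv _ hg.1 (by rw [h]; exact Sym2.mem_mk_left _ _)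
      have hNmat := insert_matching hflipm huv hu' hv'
      have hAcard : Ase.ncard = kk := by
        rw [hAse, Set.ncard_image_of_injOn, iio_ncard]
        intro a ha b hb hab
        have ha' : a < kk := ha
        have hb' : b < kk := hb
        simp only at hab
        rcases Sym2.eq_iff.mp hab with ⟨h1, _⟩ | ⟨h1, _⟩
        · have := hinj (2*a) (by omega) (2*b) (by omega) h1
          omega
        · have := hinj (2*a) (by omega) (2*b+1) (by omega) h1
          omega
      have hBcard : Bse.ncard = kk := by
        rw [hBse, Set.ncard_image_of_injOn, iio_ncard]
        intro a ha b hb hab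
        have ha' : a < kk := ha
        have hb' : b < kk := hb
        simp only at hab
        rcases Sym2.eq_iff.mp hab with ⟨h1, _⟩ | ⟨h1, _⟩
        · have := hinj (2*a+1) (by omega) (2*b+1) (by omega) h1
          omega
        · have := hinj (2*a+1) (by omega) (2*b+2) (by omega) h1
          omega
      have hAN : Ase ⊆ N := fun e he => (hAsub he).1
      have hdisj : Disjoint (N \ Ase) Bse := by
        rw [Set.disjoint_right]
        intro e heB heN
        exact (hBsub heB).2 heN.1
      have hkle : kk ≤ N.ncard := by
        rw [← hAcard]
        exact Set.ncard_le_ncard hAN (Set.toFinite N)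
      have hc1 : ((N \ Ase) ∪ Bse).ncard = N.ncard := by
        rw [Set.ncard_union_eq hdisj (Set.toFinite _) (Set.toFinite _),
          Set.ncard_diff hAN (Set.toFinite _), hAcard, hBcard]
        omega
      have hnotmem : s(u, v) ∉ (N \ Ase) ∪ Bse := fun h => hu' _ h (Sym2.mem_mk_left _ _)
      have hc2 := Set.ncard_insert_of_notMem hnotmem (Set.toFinite _)
      have := hN.2 _ hNmat
      omega
  · -- n odd: x n is unmatched in M, augmenting path
    have hnmod : n % 2 = 1 := Nat.odd_iff.mp hod
    have hMend : ∀ f ∈ M, x n ∉ f := by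
      intro f hf hxnf
      obtain ⟨y, rfl⟩ : ∃ w, f = s(x n, w) :=
        ⟨Sym2.Mem.other hxnf, (Sym2.other_spec hxnf).symm⟩
      have hadjny : G.Adj (x n) y := hM.1.1 hf
      obtain ⟨m, hm⟩ : ∃ m, n = m + 1 := ⟨n - 1, by omega⟩
      have harr : s(x m, x (m+1)) ∈ N \ M :=
        (hedge m (by omega)).1 (by simp only [Nat.even_iff]; omega)
      have hfMN : s(x n, y) ∈ M \ N := by
        refine ⟨hf, fun hfN => ?_⟩
        have heq := match_unique hN.1 hfN harr.1 (Sym2.mem_mk_left _ _)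
          (show x n ∈ s(x m, x (m+1)) by rw [hm]; exact Sym2.mem_mk_right _ _)
        rw [heq] at hf
        exact harr.2 hf
      have hyfresh : ∀ i, i ≤ n → y ≠ x i := by
        intro i hi hyi
        by_cases hin : i = n
        · rw [hin] at hyi
          exact hadjny.ne' hyi
        by_cases hi0 : i = 0
        · subst hi0
          rw [hx0] at hyi
          exact hMu _ hf (by rw [← hyi]; exact Sym2.mem_mk_right _ _)
        rcases Nat.even_or_odd i with hie | hio
        · have hie' : i % 2 = 0 := Nat.even_iff.mp hie
          obtain ⟨m', rfl⟩ : ∃ m', i = m' + 1 := ⟨i - 1, by omega⟩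
          have hg : s(x m', x (m'+1)) ∈ M \ N :=
            (hedge m' (by omega)).2 (by simp only [Nat.even_iff]; omega)
          have heq := match_unique hM.1 hf hg.1
            (show x (m'+1) ∈ s(x n, y) by rw [← hyi]; exact Sym2.mem_mk_right _ _)
            (Sym2.mem_mk_right _ _)
          rcases Sym2.eq_iff.mp heq with ⟨h1, _⟩ | ⟨h1, _⟩
          · have := hinj n le_rfl m' (by omega) h1
            omega
          · have := hinj n le_rfl (m'+1) (by omega) h1
            omega
        · have hi1 : i % 2 = 1 := Nat.odd_iff.mp hio
          have hg : s(x i, x (i+1)) ∈ M \ N :=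
            (hedge i (by omega)).2 (by simp only [Nat.even_iff]; omega)
          have heq := match_unique hM.1 hf hg.1
            (show x i ∈ s(x n, y) by rw [← hyi]; exact Sym2.mem_mk_right _ _)
            (Sym2.mem_mk_left _ _)
          rcases Sym2.eq_iff.mp heq with ⟨h1, _⟩ | ⟨h1, _⟩
          · have := hinj n le_rfl i (by omega) h1
            omega
          · have := hinj n le_rfl (i+1) (by omega) h1
            omega
      exact hnoext y hyfresh ⟨fun h => absurd h (by simp only [Nat.even_iff]; omega),
        fun _ => hfMN⟩
    -- augment M along the path
    have hkk2 : n = 2 * (n / 2) + 1 := by omega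
    set kk := n / 2 with hkkdef
    set Ase : Set (Sym2 V) := (fun j => s(x (2*j), x (2*j+1))) '' (Set.Iio (kk+1)) with hAse
    set Bse : Set (Sym2 V) := (fun j => s(x (2*j+1), x (2*j+2))) '' (Set.Iio kk) with hBse
    have hAsub : Ase ⊆ N \ M := by
      rintro e ⟨j, hj, rfl⟩
      have hj' : j < kk + 1 := hj
      exact (hedge (2*j) (by omega)).1 (even_two_mul j)
    have hBsub : Bse ⊆ M \ N := by
      rintro e ⟨j, hj, rfl⟩
      have hj' : j < kk := hj
      have h := (hedge (2*j+1) (by omega)).2 (by simp only [Nat.even_iff]; omega)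
      rw [show 2*j+1+1 = 2*j+2 from by omega] at h
      exact h
    have claimM : ∀ i, i ≤ n → ∀ f ∈ M, x i ∈ f → f ∈ Bse := by
      intro i hi f hf hxif
      by_cases hin : i = n
      · exact absurd hxif (by rw [hin]; exact hMend f hf)
      by_cases hi0 : i = 0
      · exact absurd hxif (by rw [hi0, hx0]; exact hMu f hf)
      rcases Nat.even_or_odd i with hie | hio
      · have hie' : i % 2 = 0 := Nat.even_iff.mp hie
        obtain ⟨m', rfl⟩ : ∃ m', i = m' + 1 := ⟨i - 1, by omega⟩
        have hg : s(x m', x (m'+1)) ∈ M \ N :=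
          (hedge m' (by omega)).2 (by simp only [Nat.even_iff]; omega)
        have heq := match_unique hM.1 hf hg.1 hxif (Sym2.mem_mk_right _ _)
        refine ⟨m'/2, show m'/2 < kk by omega, ?_⟩
        simp only
        rw [show 2*(m'/2)+1 = m' from by omega, show 2*(m'/2)+2 = m'+1 from by omega]
        exact heq.symm
      · have hi1 : i % 2 = 1 := Nat.odd_iff.mp hio
        have hg : s(x i, x (i+1)) ∈ M \ N :=
          (hedge i (by omega)).2 (by simp only [Nat.even_iff]; omega)
        have heq := match_unique hM.1 hf hg.1 hxif (Sym2.mem_mk_left _ _)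
        refine ⟨i/2, show i/2 < kk by omega, ?_⟩
        simp only
        rw [show 2*(i/2)+1 = i from by omega, show 2*(i/2)+2 = i+1 from by omega]
        exact heq.symm
    have hApair : ∀ e ∈ Ase, ∀ f ∈ Ase, e ≠ f → ∀ w : V, w ∈ e → w ∉ f :=
      fun e he f hf => hN.1.2 e (hAsub he).1 f (hAsub hf).1
    have hmeet : ∀ e ∈ Ase, ∀ f ∈ M, (∃ w : V, w ∈ e ∧ w ∈ f) → f ∈ Bse := by
      rintro e ⟨j, hj, rfl⟩ f hf ⟨w, hwe, hwf⟩
      have hj' : j < kk + 1 := hj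
      rcases Sym2.mem_iff.mp hwe with rfl | rfl
      · exact claimM (2*j) (by omega) f hf hwf
      · exact claimM (2*j+1) (by omega) f hf hwf
    have hflipm := flip_matching hM.1 (fun e he => hN.1.1 (hAsub he).1) hApair hmeet
    have hAcard : Ase.ncard = kk + 1 := by
      rw [hAse, Set.ncard_image_of_injOn, iio_ncard]
      intro a ha b hb hab
      have ha' : a < kk + 1 := ha
      have hb' : b < kk + 1 := hb
      simp only at hab
      rcases Sym2.eq_iff.mp hab with ⟨h1, _⟩ | ⟨h1, _⟩
      · have := hinj (2*a) (by omega) (2*b) (by omega) h1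
        omega
      · have := hinj (2*a) (by omega) (2*b+1) (by omega) h1
        omega
    have hBcard : Bse.ncard = kk := by
      rw [hBse, Set.ncard_image_of_injOn, iio_ncard]
      intro a ha b hb hab
      have ha' : a < kk := ha
      have hb' : b < kk := hb
      simp only at hab
      rcases Sym2.eq_iff.mp hab with ⟨h1, _⟩ | ⟨h1, _⟩
      · have := hinj (2*a+1) (by omega) (2*b+1) (by omega) h1
        omega
      · have := hinj (2*a+1) (by omega) (2*b+2) (by omega) h1
        omega
    have hBM : Bse ⊆ M := fun e he => (hBsub he).1
    have hdisj : Disjoint (M \ Bse) Ase := by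
      rw [Set.disjoint_right]
      intro e heA heM
      exact (hAsub heA).2 heM.1
    have hkle : kk ≤ M.ncard := by
      rw [← hBcard]
      exact Set.ncard_le_ncard hBM (Set.toFinite M)
    have hc1 : ((M \ Bse) ∪ Ase).ncard = M.ncard + 1 := by
      rw [Set.ncard_union_eq hdisj (Set.toFinite _) (Set.toFinite _),
        Set.ncard_diff hBM (Set.toFinite _), hAcard, hBcard]
      omega
    have := hM.2 _ hflipm
    omega

/-- In a finite bipartite graph, the set of vertices covered by every
maximum matching is a vertex cover. -/
theorem stmt_14 {V : Type*} [Fintype V] (G : SimpleGraph V) (X Y : Set V)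
    (hB : IsBipartition G X Y) (u v : V) (huv : G.Adj u v) :
    CoveredByAllMax G u ∨ CoveredByAllMax G v := by
  by_contra h
  push_neg at h
  obtain ⟨hu, hv⟩ := h
  simp only [CoveredByAllMax, CoveredBy] at hu hv
  push_neg at hu hv
  obtain ⟨M, hM, hMu⟩ := hu
  obtain ⟨N, hN, hNv⟩ := hv
  exact key G X Y hB u v huv M N hM hN hMu hNv
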